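/- arXiv:1004.2422 — 2 statements merged into one kernel-verified Lean document; each statement's English description precedes it below -/
import Mathlib

section
/- Let G be an amenable group with Følner net F = (F_j)_{j∈J}, and let A and B be finite sets. If X ⊆ A^G and Y ⊆ B^G are subshifts such that there exists a bijective cellular automaton τ : X → Y, then ent_F(X) = ent_F(Y). -/
open Pointwise Filter

variable {G : Type*} [Group G]

/-- The shift action of `G` on configurations: `(g • x)(h) = x(g⁻¹h)`. -/
def shift {A : Type*} (g : G) (x : G → A) : G → A := fun h => x (g⁻¹ * h)

/-- A subshift: a closed, shift-invariant subset of `A^G` (prodiscrete topology). -/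
def IsSubshift {A : Type*} [TopologicalSpace A] (X : Set (G → A)) : Prop :=
  IsClosed X ∧ ∀ g : G, ∀ x ∈ X, shift g x ∈ X

/-- The `Δ`-neighborhood `Ω^{+Δ} = ΩΔ⁻¹ = {g : gΔ ∩ Ω ≠ ∅}`. -/
def plusNbhd (Ω Δ : Set G) : Set G := {g : G | ∃ d ∈ Δ, g * d ∈ Ω}

/-- `Δ`-irreducibility of a subshift. -/
def DeltaIrreducible {A : Type*} (Δ : Finset G) (X : Set (G → A)) : Prop :=
  ∀ Ω₁ Ω₂ : Finset G,
    plusNbhd (Ω₁ : Set G) (Δ : Set G) ∩ (Ω₂ : Set G) = ∅ →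
    ∀ x₁ ∈ X, ∀ x₂ ∈ X,
      ∃ x ∈ X, (∀ g ∈ Ω₁, x g = x₁ g) ∧ (∀ g ∈ Ω₂, x g = x₂ g)

/-- Strong irreducibility: `Δ`-irreducible for some finite `Δ ⊆ G`. -/
def StronglyIrreducible {A : Type*} (X : Set (G → A)) : Prop :=
  ∃ Δ : Finset G, DeltaIrreducible Δ X

/-- A cellular automaton between subshifts `X ⊆ A^G` and `Y ⊆ B^G`:
a map that sends `X` into `Y`, is continuous on `X`, and is `G`-equivariant on `X`. -/
def IsCellularAutomaton {A B : Type*} [TopologicalSpace A] [TopologicalSpace B]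
    (X : Set (G → A)) (Y : Set (G → B)) (τ : (G → A) → (G → B)) : Prop :=
  Set.MapsTo τ X Y ∧ ContinuousOn τ X ∧ ∀ g : G, ∀ x ∈ X, τ (shift g x) = shift g (τ x)

/-- Pre-injectivity of a map on a subshift `X`. -/
def PreInjective {A B : Type*} (X : Set (G → A)) (τ : (G → A) → (G → B)) : Prop :=
  ∀ x₁ ∈ X, ∀ x₂ ∈ X, {g : G | x₁ g ≠ x₂ g}.Finite → τ x₁ = τ x₂ → x₁ = x₂

/-- A Følner net for `G`, indexed by a directed preorder `J`. -/
def IsFolnerNet {J : Type*} [Preorder J] (F : J → Finset G) : Prop :=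
  (∀ j, (F j).Nonempty) ∧
  ∀ E : Finset G,
    Tendsto (fun j => ((plusNbhd (F j : Set G) (E : Set G) \ (F j : Set G)).ncard : ℝ) /
        ((F j).card : ℝ)) atTop (nhds 0)

/-- The entropy of a subset `X ⊆ A^G` with respect to a Følner net `F`. -/
noncomputable def entropy {J A : Type*} [Preorder J] (F : J → Finset G) (X : Set (G → A)) : ℝ :=
  limsup (fun j => Real.log (((Set.restrict (F j : Set G)) '' X).ncard : ℝ) / ((F j).card : ℝ))
    atTop

/-- Topological mixing for a subshift (open subsets of `X` are traces of ambient opens). -/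
def TopologicallyMixing {A : Type*} [TopologicalSpace A] (X : Set (G → A)) : Prop :=
  ∀ U V : Set (G → A), IsOpen U → IsOpen V → (U ∩ X).Nonempty → (V ∩ X).Nonempty →
    ∃ F : Finset G, ∀ g : G, g ∉ F → ((U ∩ X) ∩ (shift g '' (V ∩ X))).Nonempty

/-- An `(E,E')`-tiling. -/
def IsTiling (E E' T : Set G) : Prop :=
  T.PairwiseDisjoint (fun g => g • E) ∧ (⋃ g ∈ T, g • E') = Set.univ

section Memory

variable {G : Type*} [Group G]

lemma exists_memory {A B : Type*} [Fintype A] [TopologicalSpace A] [DiscreteTopology A]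
    [TopologicalSpace B] [DiscreteTopology B]
    {X : Set (G → A)} {Y : Set (G → B)} (hX : IsSubshift X)
    {τ : (G → A) → (G → B)} (hτ : IsCellularAutomaton X Y τ) :
    ∃ S : Finset G, (1 : G) ∈ S ∧ ∀ x₁ ∈ X, ∀ x₂ ∈ X, ∀ g : G,
      (∀ s ∈ S, x₁ (g * s) = x₂ (g * s)) → τ x₁ g = τ x₂ g := by
  classical
  have hcomp : IsCompact X := hX.1.isCompact
  set φ : (G → A) → B := fun x => τ x 1 with hφdef
  have hφ : ContinuousOn φ X := (continuous_apply (1 : G)).comp_continuousOn hτ.2.1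
  -- local memory sets around each point
  have hloc : ∀ x ∈ X, ∃ S : Finset G, ∀ x' ∈ X, (∀ s ∈ S, x' s = x s) → φ x' = φ x := by
    intro x hx
    have h1 : φ ⁻¹' {φ x} ∈ nhdsWithin x X := by
      exact hφ x hx (by simp [isOpen_discrete, IsOpen.mem_nhds])
    rw [mem_nhdsWithin] at h1
    obtain ⟨U, hUo, hxU, hUX⟩ := h1
    have hU : U ∈ nhds x := hUo.mem_nhds hxU
    rw [nhds_pi, Filter.mem_pi] at hU
    obtain ⟨I, hIfin, t, ht, hsub⟩ := hU
    refine ⟨hIfin.toFinset, fun x' hx' hagree => ?_⟩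
    have hx'U : x' ∈ U := by
      apply hsub
      intro i hi
      have : x' i = x i := hagree i (hIfin.mem_toFinset.mpr hi)
      rw [this]
      have := ht i
      rwa [mem_nhds_discrete] at this
    exact hUX ⟨hx'U, hx'⟩
  choose! Sx hSx using hloc
  -- cover X by cylinders and extract finite subcover
  let cyl : (G → A) → Set (G → A) := fun x => {x' | ∀ s ∈ Sx x, x' s = x s}
  have hcylopen : ∀ x : G → A, IsOpen (cyl x) := by
    intro x
    have : cyl x = Set.pi (↑(Sx x) : Set G) (fun s => {x s}) := by
      ext x'; simp [cyl, Set.mem_pi]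
    rw [this]
    exact isOpen_set_pi (Finset.finite_toSet _) (fun i _ => isOpen_discrete _)
  have hcover : X ⊆ ⋃ x : X, cyl (x : G → A) := by
    intro x hx
    exact Set.mem_iUnion.mpr ⟨⟨x, hx⟩, fun s _ => rfl⟩
  obtain ⟨t, ht⟩ := hcomp.elim_finite_subcover (fun x : X => cyl (x : G → A))
    (fun x => hcylopen _) hcover
  set S : Finset G := insert 1 (t.sup (fun x => Sx (x : G → A))) with hSdef
  have hS1 : (1 : G) ∈ S := Finset.mem_insert_self _ _
  -- S is a memory set at the identity
  have hkey : ∀ x₁ ∈ X, ∀ x₂ ∈ X, (∀ s ∈ S, x₁ s = x₂ s) → φ x₁ = φ x₂ := by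
    intro x₁ hx₁ x₂ hx₂ hagree
    obtain ⟨x₀, hx₀t, hx₁cyl⟩ := Set.mem_iUnion₂.mp (ht hx₁)
    have hsub : Sx (x₀ : G → A) ⊆ S :=
      Finset.Subset.trans (Finset.le_sup (f := fun x : X => Sx (x : G → A)) hx₀t)
        (Finset.subset_insert _ _)
    have h1 : φ x₁ = φ x₀ := hSx _ x₀.2 x₁ hx₁ hx₁cyl
    have h2 : φ x₂ = φ x₀ := by
      refine hSx _ x₀.2 x₂ hx₂ (fun s hs => ?_)
      rw [← hagree s (hsub hs)]
      exact hx₁cyl s hs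
    rw [h1, h2]
  refine ⟨S, hS1, fun x₁ hx₁ x₂ hx₂ g hagree => ?_⟩
  have key : ∀ x ∈ X, τ x g = φ (shift g⁻¹ x) := by
    intro x hx
    show τ x g = τ (shift g⁻¹ x) 1
    rw [hτ.2.2 g⁻¹ x hx]
    simp [shift]
  rw [key x₁ hx₁, key x₂ hx₂]
  exact hkey _ (hX.2 g⁻¹ x₁ hx₁) _ (hX.2 g⁻¹ x₂ hx₂)
    (fun s hs => by simpa [shift] using hagree s hs)

end Memory

section EntropyLe

variable {G : Type*} [Group G]

lemma plusNbhd_inv_eq_mul (Ω S : Finset G) [DecidableEq G] :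
    plusNbhd (Ω : Set G) ((S⁻¹ : Finset G) : Set G) = ((Ω * S : Finset G) : Set G) := by
  ext g
  constructor
  · rintro ⟨d, hd, hgd⟩
    rw [Finset.mem_coe, Finset.mem_inv] at hd
    obtain ⟨s, hs, rfl⟩ := hd
    have h2 : g * s⁻¹ * s ∈ Ω * S := Finset.mul_mem_mul (Finset.mem_coe.mp hgd) hs
    rw [inv_mul_cancel_right] at h2
    exact Finset.mem_coe.mpr h2
  · intro hg
    rw [Finset.mem_coe, Finset.mem_mul] at hg
    obtain ⟨ω, hω, s, hs, rfl⟩ := hg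
    refine ⟨s⁻¹, Finset.mem_coe.mpr (Finset.inv_mem_inv hs), ?_⟩
    rw [mul_inv_cancel_right]
    exact Finset.mem_coe.mpr hω

lemma entropy_le_of_surj_ca {A B : Type*} [Fintype A] [Fintype B]
    [TopologicalSpace A] [DiscreteTopology A] [TopologicalSpace B] [DiscreteTopology B]
    {J : Type*} [Nonempty J] [Preorder J] [IsDirected J (· ≤ ·)]
    (F : J → Finset G) (hF : IsFolnerNet F)
    {X : Set (G → A)} {Y : Set (G → B)} (hX : IsSubshift X)
    {τ : (G → A) → (G → B)} (hτ : IsCellularAutomaton X Y τ)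
    (hsurj : τ '' X = Y) (hne : X.Nonempty) :
    entropy F Y ≤ entropy F X := by
  classical
  haveI : (atTop : Filter J).NeBot := atTop_neBot_iff.mpr ⟨‹_›, ‹_›⟩
  obtain ⟨S, hS1, hmem⟩ := exists_memory hX hτ
  obtain ⟨x₀, hx₀⟩ := hne
  haveI : Nonempty A := ⟨x₀ 1⟩
  haveI : Nonempty B := ⟨τ x₀ 1⟩
  have cardA1 : (1 : ℝ) ≤ (Fintype.card A : ℝ) := by exact_mod_cast Fintype.card_pos
  have logA0 : 0 ≤ Real.log (Fintype.card A) := Real.log_nonneg cardA1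
  set aX : J → ℝ := fun j =>
    Real.log (((Set.restrict ((F j : Finset G) : Set G)) '' X).ncard : ℝ) / ((F j).card : ℝ)
    with haX
  set aY : J → ℝ := fun j =>
    Real.log (((Set.restrict ((F j : Finset G) : Set G)) '' Y).ncard : ℝ) / ((F j).card : ℝ)
    with haY
  set c : J → ℝ := fun j =>
    ((plusNbhd ((F j : Finset G) : Set G) (((S⁻¹ : Finset G) : Set G)) \
      ((F j : Finset G) : Set G)).ncard : ℝ) / ((F j).card : ℝ) * Real.log (Fintype.card A)
    with hc
  have main : ∀ j, aY j ≤ aX j + c j := by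
    intro j
    set Ω : Finset G := F j with hΩ
    set Ω' : Finset G := Ω * S with hΩ'
    have hΩpos : (0 : ℝ) < (Ω.card : ℝ) := by exact_mod_cast (hF.1 j).card_pos
    have hΩsub : ((Ω : Finset G) : Set G) ⊆ ((Ω' : Finset G) : Set G) := by
      intro g hg
      have h2 : g * 1 ∈ Ω * S := Finset.mul_mem_mul (Finset.mem_coe.mp hg) hS1
      rw [mul_one] at h2
      exact Finset.mem_coe.mpr h2
    -- step (i): |Y_Ω| ≤ |X_Ω'|
    have step1 : ((Set.restrict ((Ω : Finset G) : Set G)) '' Y).ncard ≤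
        ((Set.restrict ((Ω' : Finset G) : Set G)) '' X).ncard := by
      set f : (↥((Ω' : Finset G) : Set G) → A) → (↥((Ω : Finset G) : Set G) → B) := fun u =>
        if h : ∃ x, x ∈ X ∧ Set.restrict ((Ω' : Finset G) : Set G) x = u then
          Set.restrict ((Ω : Finset G) : Set G) (τ h.choose)
        else Classical.arbitrary _ with hf
      have hsub : (Set.restrict ((Ω : Finset G) : Set G)) '' Y ⊆
          f '' ((Set.restrict ((Ω' : Finset G) : Set G)) '' X) := by
        rintro v ⟨y, hy, rfl⟩
        rw [← hsurj] at hy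
        obtain ⟨x, hx, rfl⟩ := hy
        refine ⟨Set.restrict ((Ω' : Finset G) : Set G) x, ⟨x, hx, rfl⟩, ?_⟩
        have hex : ∃ x', x' ∈ X ∧ Set.restrict ((Ω' : Finset G) : Set G) x' =
            Set.restrict ((Ω' : Finset G) : Set G) x := ⟨x, hx, rfl⟩
        rw [hf]
        simp only [dif_pos hex]
        funext ω
        show τ hex.choose ω.1 = τ x ω.1
        refine hmem _ hex.choose_spec.1 _ hx ω.1 (fun s hs => ?_)
        have hmemΩ' : ω.1 * s ∈ Ω' := Finset.mul_mem_mul (Finset.mem_coe.mp ω.2) hs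
        exact congrFun hex.choose_spec.2 ⟨ω.1 * s, Finset.mem_coe.mpr hmemΩ'⟩
      calc ((Set.restrict ((Ω : Finset G) : Set G)) '' Y).ncard
          ≤ (f '' ((Set.restrict ((Ω' : Finset G) : Set G)) '' X)).ncard :=
            Set.ncard_le_ncard hsub (Set.toFinite _)
        _ ≤ ((Set.restrict ((Ω' : Finset G) : Set G)) '' X).ncard :=
            Set.ncard_image_le (Set.toFinite _)
    -- step (ii): |X_Ω'| ≤ |X_Ω| * |A|^{|Ω' \ Ω|}
    have step2 : ((Set.restrict ((Ω' : Finset G) : Set G)) '' X).ncard ≤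
        ((Set.restrict ((Ω : Finset G) : Set G)) '' X).ncard *
          Fintype.card A ^ (Ω' \ Ω).card := by
      set p : (↥((Ω' : Finset G) : Set G) → A) →
          (↥((Ω : Finset G) : Set G) → A) × (↥(((Ω' \ Ω : Finset G)) : Set G) → A) :=
        fun u => (fun ω => u ⟨ω.1, hΩsub ω.2⟩,
                  fun ω => u ⟨ω.1, Finset.mem_coe.mpr
                    (Finset.sdiff_subset (Finset.mem_coe.mp ω.2))⟩) with hp
      have hpinj : Function.Injective p := by
        intro u v huv
        funext g
        obtain ⟨g, hg⟩ := g
        by_cases hgΩ : g ∈ Ω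
        · exact congrFun (congrArg Prod.fst huv) ⟨g, hgΩ⟩
        · have hg' : g ∈ (((Ω' \ Ω : Finset G)) : Set G) :=
            Finset.mem_coe.mpr (Finset.mem_sdiff.mpr ⟨Finset.mem_coe.mp hg, hgΩ⟩)
          exact congrFun (congrArg Prod.snd huv) ⟨g, hg'⟩
      have himg : p '' ((Set.restrict ((Ω' : Finset G) : Set G)) '' X) ⊆
          ((Set.restrict ((Ω : Finset G) : Set G)) '' X) ×ˢ
            (Set.univ : Set (↥(((Ω' \ Ω : Finset G)) : Set G) → A)) := by
        rintro w ⟨u, ⟨x, hx, rfl⟩, rfl⟩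
        exact ⟨⟨x, hx, rfl⟩, trivial⟩
      have hprod : (((Set.restrict ((Ω : Finset G) : Set G)) '' X) ×ˢ
          (Set.univ : Set (↥(((Ω' \ Ω : Finset G)) : Set G) → A))).ncard =
          ((Set.restrict ((Ω : Finset G) : Set G)) '' X).ncard *
            Fintype.card A ^ (Ω' \ Ω).card := by
        rw [← Nat.card_coe_set_eq (((Set.restrict ((Ω : Finset G) : Set G)) '' X) ×ˢ
            (Set.univ : Set (↥(((Ω' \ Ω : Finset G)) : Set G) → A))),
          Nat.card_congr (Equiv.Set.prod _ _), Nat.card_prod, Nat.card_coe_set_eq,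
          Nat.card_coe_set_eq, Set.ncard_univ, Nat.card_fun]
        have he : Nat.card ↥(((Ω' \ Ω : Finset G)) : Set G) = (Ω' \ Ω).card := by
          rw [Nat.card_coe_set_eq, Set.ncard_coe_finset]
        rw [he, Nat.card_eq_fintype_card]
      calc ((Set.restrict ((Ω' : Finset G) : Set G)) '' X).ncard
          = (p '' ((Set.restrict ((Ω' : Finset G) : Set G)) '' X)).ncard :=
            (Set.ncard_image_of_injective _ hpinj).symm
        _ ≤ _ := Set.ncard_le_ncard himg (Set.toFinite _)
        _ = _ := hprod
    -- logarithms
    have hXpos : 0 < ((((Set.restrict ((Ω : Finset G) : Set G)) '' X)).ncard : ℝ) := by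
      have hmemb : (Set.restrict ((Ω : Finset G) : Set G)) x₀ ∈
          (Set.restrict ((Ω : Finset G) : Set G)) '' X := ⟨x₀, hx₀, rfl⟩
      have := (Set.ncard_pos (Set.toFinite _)).mpr ⟨_, hmemb⟩
      exact_mod_cast this
    have hlog : Real.log (((Set.restrict ((Ω : Finset G) : Set G)) '' Y).ncard : ℝ) ≤
        Real.log (((Set.restrict ((Ω : Finset G) : Set G)) '' X).ncard : ℝ) +
          ((Ω' \ Ω).card : ℝ) * Real.log (Fintype.card A) := by
      rcases Nat.eq_zero_or_pos ((Set.restrict ((Ω : Finset G) : Set G)) '' Y).ncard with h | h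
      · rw [h]
        push_cast
        rw [Real.log_zero]
        positivity
      · have h1 : ((((Set.restrict ((Ω : Finset G) : Set G)) '' Y)).ncard : ℝ) ≤
            ((((Set.restrict ((Ω : Finset G) : Set G)) '' X)).ncard : ℝ) *
              (Fintype.card A : ℝ) ^ (Ω' \ Ω).card := by
          exact_mod_cast le_trans step1 step2
        calc Real.log (((Set.restrict ((Ω : Finset G) : Set G)) '' Y).ncard : ℝ)
            ≤ Real.log (((((Set.restrict ((Ω : Finset G) : Set G)) '' X)).ncard : ℝ) *
              (Fintype.card A : ℝ) ^ (Ω' \ Ω).card) :=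
              Real.log_le_log (by exact_mod_cast h) h1
          _ = _ := by
              rw [Real.log_mul (ne_of_gt hXpos) (by positivity), Real.log_pow]
    have hD : ((plusNbhd ((Ω : Finset G) : Set G) (((S⁻¹ : Finset G) : Set G)) \
        ((Ω : Finset G) : Set G)).ncard : ℝ) = ((Ω' \ Ω).card : ℝ) := by
      rw [plusNbhd_inv_eq_mul, ← Finset.coe_sdiff, Set.ncard_coe_finset]
    show Real.log (((Set.restrict ((Ω : Finset G) : Set G)) '' Y).ncard : ℝ) / (Ω.card : ℝ) ≤
      Real.log (((Set.restrict ((Ω : Finset G) : Set G)) '' X).ncard : ℝ) / (Ω.card : ℝ) +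
      ((plusNbhd ((Ω : Finset G) : Set G) (((S⁻¹ : Finset G) : Set G)) \
        ((Ω : Finset G) : Set G)).ncard : ℝ) / (Ω.card : ℝ) * Real.log (Fintype.card A)
    rw [hD, div_mul_eq_mul_div, ← add_div]
    gcongr
  -- bounds for limsup manipulation
  have haY0 : ∀ j, 0 ≤ aY j := by
    intro j
    apply div_nonneg _ (by positivity)
    rcases Nat.eq_zero_or_pos ((Set.restrict ((F j : Finset G) : Set G)) '' Y).ncard with h | h
    · simp [haY, h]
    · exact Real.log_nonneg (by exact_mod_cast h)
  have haX0 : ∀ j, 0 ≤ aX j := by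
    intro j
    apply div_nonneg _ (by positivity)
    rcases Nat.eq_zero_or_pos ((Set.restrict ((F j : Finset G) : Set G)) '' X).ncard with h | h
    · simp [haX, h]
    · exact Real.log_nonneg (by exact_mod_cast h)
  have haXb : ∀ j, aX j ≤ Real.log (Fintype.card A) := by
    intro j
    have hpos : (0 : ℝ) < ((F j).card : ℝ) := by exact_mod_cast (hF.1 j).card_pos
    rw [haX, div_le_iff₀ hpos]
    have hcard : ((Set.restrict ((F j : Finset G) : Set G)) '' X).ncard ≤
        Fintype.card A ^ (F j).card := by
      calc ((Set.restrict ((F j : Finset G) : Set G)) '' X).ncard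
          ≤ (Set.univ : Set (↥((F j : Finset G) : Set G) → A)).ncard :=
            Set.ncard_le_ncard (Set.subset_univ _) (Set.toFinite _)
        _ = Fintype.card A ^ (F j).card := by
            rw [Set.ncard_univ, Nat.card_fun]
            have he : Nat.card ↥((F j : Finset G) : Set G) = (F j).card := by
              rw [Nat.card_coe_set_eq, Set.ncard_coe_finset]
            rw [he, Nat.card_eq_fintype_card]
    rcases Nat.eq_zero_or_pos ((Set.restrict ((F j : Finset G) : Set G)) '' X).ncard with h | h
    · rw [h]; push_cast; rw [Real.log_zero]; positivity
    · calc Real.log (((Set.restrict ((F j : Finset G) : Set G)) '' X).ncard : ℝ)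
          ≤ Real.log ((Fintype.card A : ℝ) ^ (F j).card) :=
            Real.log_le_log (by exact_mod_cast h) (by exact_mod_cast hcard)
        _ = ((F j).card : ℝ) * Real.log (Fintype.card A) := Real.log_pow _ _
        _ = Real.log (Fintype.card A) * ((F j).card : ℝ) := mul_comm _ _
  have hc0 : ∀ j, 0 ≤ c j := by
    intro j
    apply mul_nonneg (div_nonneg (by positivity) (by positivity)) logA0
  have hctend : Tendsto c atTop (nhds 0) := by
    rw [hc]
    have h0 := (hF.2 (S⁻¹ : Finset G)).mul_const (Real.log (Fintype.card A))
    rwa [zero_mul] at h0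
  have hbX : Filter.IsBoundedUnder (· ≤ ·) atTop aX :=
    Filter.isBoundedUnder_of ⟨Real.log (Fintype.card A), haXb⟩
  have hbXg : Filter.IsBoundedUnder (· ≥ ·) atTop aX :=
    Filter.isBoundedUnder_of ⟨0, haX0⟩
  have hbc : Filter.IsBoundedUnder (· ≤ ·) atTop c := hctend.isBoundedUnder_le
  have hcc : Filter.IsCoboundedUnder (· ≤ ·) atTop c :=
    (Filter.isBoundedUnder_of ⟨0, hc0⟩ : Filter.IsBoundedUnder (· ≥ ·) atTop c).isCoboundedUnder_le
  have h1 : limsup aY atTop ≤ limsup (aX + c) atTop := by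
    refine limsup_le_limsup (Filter.Eventually.of_forall main) ?_ ?_
    · exact (Filter.isBoundedUnder_of ⟨0, haY0⟩ :
        Filter.IsBoundedUnder (· ≥ ·) atTop aY).isCoboundedUnder_le
    · exact Filter.isBoundedUnder_le_add hbX hbc
  have h2 : limsup (aX + c) atTop ≤ limsup aX atTop + limsup c atTop :=
    limsup_add_le hbXg hbX hcc hbc
  have h3 : limsup c atTop = 0 := hctend.limsup_eq
  have hYent : entropy F Y = limsup aY atTop := rfl
  have hXent : entropy F X = limsup aX atTop := rfl
  rw [hYent, hXent]
  calc limsup aY atTop ≤ limsup (aX + c) atTop := h1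
    _ ≤ limsup aX atTop + limsup c atTop := h2
    _ = limsup aX atTop := by rw [h3, add_zero]

end EntropyLe

/-- Conjugate subshifts (via a bijective cellular automaton) have the same entropy. -/
theorem entropy_eq_of_bijective_ca {A B : Type*} [Fintype A] [Fintype B]
    [TopologicalSpace A] [DiscreteTopology A] [TopologicalSpace B] [DiscreteTopology B]
    {J : Type*} [Nonempty J] [Preorder J] [IsDirected J (· ≤ ·)]
    (F : J → Finset G) (hF : IsFolnerNet F)
    (X : Set (G → A)) (Y : Set (G → B)) (hX : IsSubshift X) (hY : IsSubshift Y)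
    (τ : (G → A) → (G → B)) (hτ : IsCellularAutomaton X Y τ)
    (hinj : Set.InjOn τ X) (hsurj : τ '' X = Y) :
    entropy F X = entropy F Y := by
  classical
  rcases X.eq_empty_or_nonempty with hXe | hXne
  · have hYe : Y = ∅ := by rw [← hsurj, hXe, Set.image_empty]
    simp only [entropy, hXe, hYe, Set.image_empty, Set.ncard_empty, Nat.cast_zero,
      Real.log_zero, zero_div]
  · haveI : Nonempty (G → A) := ⟨hXne.choose⟩
    set σ : (G → B) → (G → A) := fun y =>
      if y ∈ Y then Function.invFunOn τ X y else hXne.choose with hσ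
    have hτσ : ∀ y ∈ Y, τ (σ y) = y := by
      intro y hy
      rw [hσ]; simp only [if_pos hy]
      apply Function.invFunOn_eq
      rw [← hsurj] at hy; obtain ⟨x, hx, rfl⟩ := hy; exact ⟨x, hx, rfl⟩
    have hσmem : ∀ y ∈ Y, σ y ∈ X := by
      intro y hy
      rw [hσ]; simp only [if_pos hy]
      apply Function.invFunOn_mem
      rw [← hsurj] at hy; obtain ⟨x, hx, rfl⟩ := hy; exact ⟨x, hx, rfl⟩
    have hστ : ∀ x ∈ X, σ (τ x) = x := by
      intro x hx
      have h1 : τ x ∈ Y := hsurj ▸ ⟨x, hx, rfl⟩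
      exact hinj (hσmem _ h1) hx (hτσ _ h1)
    have hσsurj : σ '' Y = X := by
      apply Set.Subset.antisymm
      · rintro _ ⟨y, hy, rfl⟩; exact hσmem y hy
      · intro x hx
        exact ⟨τ x, hsurj ▸ ⟨x, hx, rfl⟩, hστ x hx⟩
    -- continuity of σ on Y via compactness
    have hcomp : IsCompact X := hX.1.isCompact
    haveI : CompactSpace ↥X := isCompact_iff_compactSpace.mp hcomp
    let e : ↥X ≃ ↥Y :=
      { toFun := fun x => ⟨τ x.1, hsurj ▸ ⟨x.1, x.2, rfl⟩⟩
        invFun := fun y => ⟨σ y.1, hσmem y.1 y.2⟩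
        left_inv := fun x => Subtype.ext (hστ x.1 x.2)
        right_inv := fun y => Subtype.ext (hτσ y.1 y.2) }
    have hce : Continuous (e : ↥X → ↥Y) :=
      Continuous.subtype_mk (continuousOn_iff_continuous_restrict.mp hτ.2.1) _
    let homeo : ↥X ≃ₜ ↥Y := hce.homeoOfEquivCompactToT2
    have hcont : ContinuousOn σ Y := by
      rw [continuousOn_iff_continuous_restrict]
      have : Y.domRestrict σ = fun y : ↥Y => ((homeo.symm y : ↥X) : G → A) := rfl
      rw [this]
      exact continuous_subtype_val.comp homeo.symm.continuous
    have hequiv : ∀ g : G, ∀ y ∈ Y, σ (shift g y) = shift g (σ y) := by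
      intro g y hy
      have h1 : shift g y ∈ Y := hY.2 g y hy
      refine hinj (hσmem _ h1) (hX.2 g _ (hσmem y hy)) ?_
      rw [hτσ _ h1, hτ.2.2 g _ (hσmem y hy), hτσ y hy]
    have hσca : IsCellularAutomaton Y X σ := ⟨fun y hy => hσmem y hy, hcont, hequiv⟩
    have hYne : Y.Nonempty := ⟨τ hXne.choose, hsurj ▸ ⟨_, hXne.choose_spec, rfl⟩⟩
    exact le_antisymm (entropy_le_of_surj_ca F hF hY hσca hσsurj hYne)
      (entropy_le_of_surj_ca F hF hX hτ hsurj hXne)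
end

section
/- Let G be a group, let A be a finite set, and let X ⊆ A^G be a subshift. Suppose there exist a finite set B, a strongly irreducible subshift Y ⊆ B^G, and a surjective cellular automaton τ : Y → X. Then X is strongly irreducible. -/
open Pointwise Filter

variable {G : Type*} [Group G]

/-- A continuous map on a closed subset of a product of finite discrete spaces,
with values in a discrete space, has a finite "memory set". -/
lemma exists_memory_s8 {B A : Type*} [Fintype B] [TopologicalSpace B] [DiscreteTopology B]
    [TopologicalSpace A] [DiscreteTopology A]
    (Y : Set (G → B)) (hYc : IsClosed Y) (f : (G → B) → A) (hf : ContinuousOn f Y) :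
    ∃ M : Finset G, ∀ y ∈ Y, ∀ y' ∈ Y, (∀ m ∈ M, y m = y' m) → f y = f y' := by
  classical
  have hcomp : IsCompact Y := hYc.isCompact
  have key : ∀ y ∈ Y, ∃ M : Finset G, ∀ z ∈ Y, (∀ m ∈ M, z m = y m) → f z = f y := by
    intro y hy
    have h1 : f ⁻¹' {f y} ∈ nhdsWithin y Y :=
      hf y hy ((isOpen_discrete {f y}).mem_nhds rfl)
    rcases mem_nhdsWithin.mp h1 with ⟨U, hUo, hyU, hUsub⟩
    rcases isOpen_pi_iff.mp hUo y hyU with ⟨I, u, hu, hsub⟩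
    refine ⟨I, fun z hz hagree => ?_⟩
    have hzU : z ∈ U := by
      apply hsub
      intro m hm
      rw [hagree m hm]
      exact (hu m hm).2
    exact hUsub ⟨hzU, hz⟩
  choose! M hM using key
  let V : (G → B) → Set (G → B) := fun y => (↑(M y) : Set G).pi (fun m => {y m})
  have hVopen : ∀ y : Y, IsOpen (V y.1) := by
    intro y
    exact isOpen_set_pi (Finset.finite_toSet _) (fun a _ => isOpen_discrete _)
  have hcover : Y ⊆ ⋃ y : Y, V y.1 := by
    intro z hz
    exact Set.mem_iUnion.mpr ⟨⟨z, hz⟩, fun m _ => rfl⟩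
  rcases hcomp.elim_finite_subcover (fun y : Y => V y.1) hVopen hcover with ⟨t, ht⟩
  refine ⟨t.sup (fun y => M y.1), fun y hy y' hy' hagree => ?_⟩
  rcases Set.mem_iUnion₂.mp (ht hy) with ⟨i, hit, hiV⟩
  have hyi : ∀ m ∈ M i.1, y m = i.1 m := fun m hm => hiV m hm
  have hy'i : ∀ m ∈ M i.1, y' m = i.1 m := by
    intro m hm
    have hmM : m ∈ t.sup (fun y => M y.1) :=
      Finset.le_sup (f := fun y => M y.1) hit hm
    rw [← hagree m hmM]
    exact hyi m hm
  rw [hM i.1 i.2 y hy hyi, hM i.1 i.2 y' hy' hy'i]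

/-- The image of a strongly irreducible subshift under a surjective cellular
automaton is strongly irreducible. -/
theorem stronglyIrreducible_of_surjective_ca {A B : Type*} [Fintype A] [Fintype B]
    [TopologicalSpace A] [DiscreteTopology A] [TopologicalSpace B] [DiscreteTopology B]
    (X : Set (G → A)) (hX : IsSubshift X)
    (Y : Set (G → B)) (hY : IsSubshift Y) (hYSI : StronglyIrreducible Y)
    (τ : (G → B) → (G → A)) (hτ : IsCellularAutomaton Y X τ)
    (hsurj : Set.SurjOn τ Y X) :
    StronglyIrreducible X := by
  classical
  obtain ⟨Δ, hΔ⟩ := hYSI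
  -- memory set for τ at the identity
  obtain ⟨M, hM⟩ := exists_memory_s8 Y hY.1 (fun y => τ y 1)
    ((continuous_apply (1 : G)).comp_continuousOn hτ.2.1)
  -- local rule: τ y g depends only on y on g • M
  have hmem : ∀ y ∈ Y, ∀ y' ∈ Y, ∀ g : G,
      (∀ m ∈ M, y (g * m) = y' (g * m)) → τ y g = τ y' g := by
    intro y hy y' hy' g hagree
    have h1 : τ (shift g⁻¹ y) 1 = τ (shift g⁻¹ y') 1 := by
      apply hM _ (hY.2 g⁻¹ y hy) _ (hY.2 g⁻¹ y' hy')
      intro m hm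
      simpa [shift] using hagree m hm
    have e1 : τ (shift g⁻¹ y) = shift g⁻¹ (τ y) := hτ.2.2 g⁻¹ y hy
    have e2 : τ (shift g⁻¹ y') = shift g⁻¹ (τ y') := hτ.2.2 g⁻¹ y' hy'
    rw [e1, e2] at h1
    simpa [shift] using h1
  refine ⟨M * Δ * M⁻¹, ?_⟩
  intro Ω₁ Ω₂ hdisj x₁ hx₁ x₂ hx₂
  obtain ⟨y₁, hy₁, hτy₁⟩ := hsurj hx₁
  obtain ⟨y₂, hy₂, hτy₂⟩ := hsurj hx₂
  have hdisj' : plusNbhd ((Ω₁ * M : Finset G) : Set G) (Δ : Set G) ∩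
      ((Ω₂ * M : Finset G) : Set G) = ∅ := by
    rw [Set.eq_empty_iff_forall_notMem]
    rintro g ⟨⟨δ, hδ, hgδ⟩, hg2⟩
    rw [Finset.mem_coe, Finset.mem_mul] at hgδ hg2
    obtain ⟨ω₁, hω₁, m, hm, hmul1⟩ := hgδ
    obtain ⟨ω₂, hω₂, m', hm', hmul2⟩ := hg2
    have : ω₂ ∈ plusNbhd (Ω₁ : Set G) ((M * Δ * M⁻¹ : Finset G) : Set G) ∩ (Ω₂ : Set G) := by
      refine ⟨⟨m' * δ * m⁻¹, ?_, ?_⟩, hω₂⟩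
      · rw [Finset.mem_coe]
        exact Finset.mul_mem_mul (Finset.mul_mem_mul hm' hδ) (Finset.inv_mem_inv hm)
      · have key : ω₂ * (m' * δ * m⁻¹) = ω₁ := by
          rw [← hmul2] at hmul1
          calc ω₂ * (m' * δ * m⁻¹) = (ω₂ * m' * δ) * m⁻¹ := by group
            _ = (ω₁ * m) * m⁻¹ := by rw [hmul1]
            _ = ω₁ := by group
        rw [key]
        exact hω₁
    rw [hdisj] at this
    exact this
  obtain ⟨y, hyY, hag1, hag2⟩ := hΔ (Ω₁ * M) (Ω₂ * M) hdisj' y₁ hy₁ y₂ hy₂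
  refine ⟨τ y, hτ.1 hyY, ?_, ?_⟩
  · intro g hg
    rw [← hτy₁]
    apply hmem y hyY y₁ hy₁ g
    intro m hm
    exact hag1 (g * m) (Finset.mul_mem_mul hg hm)
  · intro g hg
    rw [← hτy₂]
    apply hmem y hyY y₂ hy₂ g
    intro m hm
    exact hag2 (g * m) (Finset.mul_mem_mul hg hm)
end
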